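/- Let n ≥ 2 be a natural number and let σ, w be real numbers with σ ≥ n and 0 ≤ w < n−1. Set μ = w/(σ(σ−1−w)). Then (w/σ + μ)^n ≤ μ(1+μ)^{n−1}. -/

import Mathlib

/-- Verification of the last assertion of Proposition 3.4: the value
`μ = w/(σ(σ-1-w))` satisfies `(w/σ + μ)^n ≤ μ(1+μ)^(n-1)`. -/
theorem stmt4 (n : ℕ) (hn : 2 ≤ n) (σ w : ℝ)
    (hσ : (n : ℝ) ≤ σ) (hw0 : 0 ≤ w) (hw : w < (n : ℝ) - 1) :
    (w / σ + w / (σ * (σ - 1 - w))) ^ n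
      ≤ (w / (σ * (σ - 1 - w))) * (1 + w / (σ * (σ - 1 - w))) ^ (n - 1) := by
  have hn0 : (2 : ℝ) ≤ (n : ℝ) := by exact_mod_cast hn
  have hσ0 : (0:ℝ) < σ := by linarith
  have hd : (0:ℝ) < σ - 1 - w := by linarith
  have hD : (0:ℝ) < σ * (σ - 1 - w) := mul_pos hσ0 hd
  have hσw : (0:ℝ) < σ - w := by linarith
  rcases eq_or_lt_of_le hw0 with h0 | hwpos
  · simp [← h0, zero_div, zero_pow (by omega : n ≠ 0)]
  obtain ⟨m, rfl⟩ : ∃ m, n = m + 1 := ⟨n - 1, by omega⟩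
  simp only [Nat.add_sub_cancel]
  have hm1 : 1 ≤ m := by omega
  have hwm : w < (m : ℝ) := by push_cast at hw ⊢; linarith
  have htm : (m : ℝ) ≤ σ - 1 := by push_cast at hσ; linarith
  -- key inequality : w^m * (σ - w) ≤ (σ-1)^m
  have key : w ^ m * (σ - w) ≤ (σ - 1) ^ m := by
    have hb := one_add_mul_le_pow (a := ((σ - 1) - w) / w) (le_trans (by norm_num) (div_nonneg hd.le hw0)) m
    have h1w : 1 + ((σ - 1) - w) / w = (σ - 1) / w := by field_simp; ring
    rw [h1w] at hb
    have step1 : w ^ m * (σ - w) ≤ w ^ m * (1 + (m : ℝ) * (((σ - 1) - w) / w)) := by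
      apply mul_le_mul_of_nonneg_left _ (pow_nonneg hw0 m)
      have e : (m : ℝ) * (((σ - 1) - w) / w) = ((m : ℝ) / w) * (σ - 1 - w) := by ring
      have h1 : (1 : ℝ) ≤ (m : ℝ) / w := (one_le_div hwpos).mpr hwm.le
      nlinarith [mul_le_mul_of_nonneg_right h1 hd.le]
    have step2 : w ^ m * (1 + (m : ℝ) * (((σ - 1) - w) / w)) ≤ w ^ m * ((σ - 1) / w) ^ m :=
      mul_le_mul_of_nonneg_left hb (pow_nonneg hw0 m)
    have step3 : w ^ m * ((σ - 1) / w) ^ m = (σ - 1) ^ m := by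
      rw [div_pow]
      field_simp
    linarith
  have e1 : w / σ + w / (σ * (σ - 1 - w)) = (w * (σ - w)) / (σ * (σ - 1 - w)) := by
    field_simp
    ring
  have e2 : 1 + w / (σ * (σ - 1 - w)) = ((σ - 1) * (σ - w)) / (σ * (σ - 1 - w)) := by
    field_simp
    ring
  rw [e1, e2, div_pow, div_pow, div_mul_div_comm]
  have e3 : σ * (σ - 1 - w) * (σ * (σ - 1 - w)) ^ m = (σ * (σ - 1 - w)) ^ (m + 1) := by
    rw [pow_succ]; ring
  rw [e3]
  rw [div_le_div_iff_of_pos_right (pow_pos hD (m + 1))]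
  have eL : (w * (σ - w)) ^ (m + 1) = (w * (σ - w) ^ m) * (w ^ m * (σ - w)) := by
    rw [mul_pow, pow_succ, pow_succ]; ring
  have eR : w * ((σ - 1) * (σ - w)) ^ m = (w * (σ - w) ^ m) * (σ - 1) ^ m := by
    rw [mul_pow]; ring
  rw [eL, eR]
  exact mul_le_mul_of_nonneg_left key (by positivity)
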